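/- Fix i ≥ 1. Let the attention weight vector a_i ∈ ℝ^i have support size S_i = R_i + N_i, where R_i ≤ r deterministically and E[N_i] ≤ κ. Then the expected effective entropy satisfies E[H(a_i)] ≤ log(1 + r + κ), where H(a_i) is the Shannon entropy of the ℓ1-normalized absolute weights. -/
import Mathlib


open MeasureTheory
open scoped Classical

/-- Effective entropy: Shannon entropy of the ℓ1-normalized absolute values of a vector
(taken to be 0 when the vector is 0). -/
noncomputable def effEntropy {n : ℕ} (a : Fin n → ℝ) : ℝ :=
  if (∑ j, |a j|) = 0 then 0
  else -∑ j, (|a j| / ∑ k, |a k|) * Real.log (|a j| / ∑ k, |a k|)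

lemma entropy_le_log_card {n : ℕ} (p : Fin n → ℝ) (hp : ∀ j, 0 ≤ p j)
    (hsum : ∑ j, p j = 1) :
    -∑ j, p j * Real.log (p j) ≤
      Real.log ((Finset.univ.filter fun j => p j ≠ 0).card) := by
  set s := Finset.univ.filter fun j => p j ≠ 0 with hs
  have hmem : ∀ j ∈ s, p j ≠ 0 := fun j hj => (Finset.mem_filter.mp hj).2
  have hpos : ∀ j ∈ s, 0 < p j := fun j hj => lt_of_le_of_ne (hp j) (Ne.symm (hmem j hj))
  have hsum' : ∑ j ∈ s, p j = 1 := by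
    rw [← hsum]; exact Finset.sum_filter_ne_zero _
  have key := (strictConcaveOn_log_Ioi.concaveOn).le_map_sum
    (t := s) (w := fun j => p j) (p := fun j => (p j)⁻¹)
    (fun j hj => hp j) hsum'
    (fun j hj => Set.mem_Ioi.mpr (inv_pos.mpr (hpos j hj)))
  have h1 : ∑ j ∈ s, p j • (p j)⁻¹ = (s.card : ℝ) := by
    rw [Finset.sum_congr rfl fun j hj => by
      rw [smul_eq_mul, mul_inv_cancel₀ (hmem j hj)]]
    simp
  have h3 : ∑ j ∈ s, p j * Real.log (p j) = ∑ j, p j * Real.log (p j) :=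
    Finset.sum_subset (Finset.subset_univ s) (fun j _ hj => by
      have hz : p j = 0 := by
        by_contra h; exact hj (Finset.mem_filter.mpr ⟨Finset.mem_univ j, h⟩)
      simp [hz])
  have h2 : ∑ j ∈ s, p j • Real.log ((p j)⁻¹) = -∑ j, p j * Real.log (p j) := by
    rw [← h3, ← Finset.sum_neg_distrib]
    exact Finset.sum_congr rfl fun j hj => by rw [smul_eq_mul, Real.log_inv, mul_neg]
  rw [h1, h2] at key
  exact key

lemma effEntropy_nonneg {n : ℕ} (a : Fin n → ℝ) : 0 ≤ effEntropy a := by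
  unfold effEntropy
  split_ifs with h
  · exact le_refl _
  · rw [neg_nonneg]
    apply Finset.sum_nonpos
    intro j _
    have hTpos : 0 < ∑ k, |a k| :=
      lt_of_le_of_ne (Finset.sum_nonneg fun k _ => abs_nonneg _) (Ne.symm h)
    have h1 : 0 ≤ |a j| / ∑ k, |a k| := div_nonneg (abs_nonneg _) hTpos.le
    have h2 : |a j| / ∑ k, |a k| ≤ 1 := by
      rw [div_le_one hTpos]
      exact Finset.single_le_sum (fun k _ => abs_nonneg (a k)) (Finset.mem_univ j)
    exact Real.mul_log_nonpos h1 h2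

lemma effEntropy_le_log {n : ℕ} (a : Fin n → ℝ) :
    effEntropy a ≤ Real.log (1 + (Finset.univ.filter fun j => a j ≠ 0).card) := by
  have hlog0 : (0:ℝ) ≤ Real.log (1 + (Finset.univ.filter fun j => a j ≠ 0).card) := by
    apply Real.log_nonneg
    have : (0:ℝ) ≤ ((Finset.univ.filter fun j => a j ≠ 0).card : ℝ) := Nat.cast_nonneg _
    linarith
  unfold effEntropy
  split_ifs with h
  · exact hlog0
  · set T := ∑ k, |a k| with hT
    have hTpos : 0 < T := lt_of_le_of_ne (Finset.sum_nonneg fun k _ => abs_nonneg _) (Ne.symm h)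
    set p := fun j => |a j| / T with hpdef
    have hp : ∀ j, 0 ≤ p j := fun j => div_nonneg (abs_nonneg _) hTpos.le
    have hsum : ∑ j, p j = 1 := by
      rw [← Finset.sum_div, ← hT, div_self hTpos.ne']
    have hsupp : (Finset.univ.filter fun j => p j ≠ 0) =
        (Finset.univ.filter fun j => a j ≠ 0) := by
      apply Finset.filter_congr
      intro j _
      simp [hpdef, div_eq_zero_iff, hTpos.ne', abs_eq_zero]
    have := entropy_le_log_card p hp hsum
    rw [hsupp] at this
    have hex : ∃ j, a j ≠ 0 := by
      by_contra hc
      push_neg at hc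
      exact h (by rw [hT]; simp [hc])
    obtain ⟨j0, hj0⟩ := hex
    have hcard : 1 ≤ (Finset.univ.filter fun j => a j ≠ 0).card :=
      Finset.card_pos.mpr ⟨j0, Finset.mem_filter.mpr ⟨Finset.mem_univ _, hj0⟩⟩
    refine this.trans (Real.log_le_log ?_ ?_)
    · exact_mod_cast hcard
    · linarith

/-- **Key estimate of Theorem 4.4 (TRA is non-dispersive).** If the support size of the
attention vector splits as S_i = R_i + N_i with R_i ≤ r deterministically and E[N_i] ≤ κ,
then E[H(a_i)] ≤ log(1 + r + κ). -/
theorem tra_expected_entropy_bound {Ω : Type*} [MeasurableSpace Ω]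
    (μ : Measure Ω) [IsProbabilityMeasure μ]
    (i : ℕ) (hi : 1 ≤ i) (a : Ω → Fin i → ℝ) (R N : Ω → ℕ) (r κ : ℝ)
    (hmeasa : Measurable a) (hmeasN : Measurable N)
    (hintN : Integrable (fun ω => (N ω : ℝ)) μ)
    (hsplit : ∀ ω, (Finset.univ.filter fun j => a ω j ≠ 0).card = R ω + N ω)
    (hR : ∀ ω, (R ω : ℝ) ≤ r)
    (hN : ∫ ω, (N ω : ℝ) ∂μ ≤ κ) :
    ∫ ω, effEntropy (a ω) ∂μ ≤ Real.log (1 + r + κ) := by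
  have hΩ : Nonempty Ω := by
    by_contra hc
    rw [not_nonempty_iff] at hc
    have h1 : μ Set.univ = 1 := measure_univ
    rw [Set.univ_eq_empty_iff.mpr hc, measure_empty] at h1
    exact zero_ne_one h1
  obtain ⟨ω0⟩ := hΩ
  have hr0 : (0:ℝ) ≤ r := le_trans (Nat.cast_nonneg _) (hR ω0)
  have hκ0 : (0:ℝ) ≤ κ :=
    le_trans (integral_nonneg fun ω => Nat.cast_nonneg _) hN
  set c : ℝ := 1 + r + κ with hc
  have hcpos : 0 < c := by positivity
  set g : Ω → ℝ := fun ω => Real.log c + ((N ω : ℝ) - κ) / c with hg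
  have hgint : Integrable g μ := by
    apply Integrable.add (integrable_const _)
    exact ((hintN.sub (integrable_const _)).div_const c)
  have hpw : ∀ ω, effEntropy (a ω) ≤ g ω := by
    intro ω
    have h1 := effEntropy_le_log (a ω)
    rw [hsplit ω] at h1
    have h2 : (1:ℝ) + ((R ω + N ω : ℕ) : ℝ) ≤ 1 + r + (N ω : ℝ) := by
      push_cast
      linarith [hR ω]
    have h3 : Real.log (1 + ((R ω + N ω : ℕ) : ℝ)) ≤ Real.log (1 + r + (N ω : ℝ)) := by
      apply Real.log_le_log ?_ h2
      positivity
    have h4 : Real.log (1 + r + (N ω : ℝ)) ≤ g ω := by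
      have hx : (0:ℝ) < 1 + r + (N ω : ℝ) := by positivity
      have h5 : Real.log ((1 + r + (N ω : ℝ)) / c) ≤ (1 + r + (N ω : ℝ)) / c - 1 :=
        Real.log_le_sub_one_of_pos (by positivity)
      rw [Real.log_div hx.ne' hcpos.ne'] at h5
      have h6 : (1 + r + (N ω : ℝ)) / c - 1 = ((N ω : ℝ) - κ) / c := by
        field_simp
        ring
      rw [h6] at h5
      simp only [hg]
      linarith
    exact h1.trans (h3.trans h4)
  have hmain : ∫ ω, effEntropy (a ω) ∂μ ≤ ∫ ω, g ω ∂μ := by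
    apply integral_mono_of_nonneg
    · exact Filter.Eventually.of_forall fun ω => effEntropy_nonneg (a ω)
    · exact hgint
    · exact Filter.Eventually.of_forall hpw
  have hgval : ∫ ω, g ω ∂μ ≤ Real.log c := by
    have : ∫ ω, g ω ∂μ = Real.log c + (∫ ω, (N ω : ℝ) ∂μ - κ) / c := by
      have hsub : Integrable (fun ω => ((N ω : ℝ) - κ) / c) μ :=
        (hintN.sub (integrable_const _)).div_const c
      rw [hg]
      rw [integral_add (integrable_const _) hsub]
      rw [integral_div]
      rw [integral_sub hintN (integrable_const _)]
      simp
    rw [this]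
    have : (∫ ω, (N ω : ℝ) ∂μ - κ) / c ≤ 0 :=
      div_nonpos_of_nonpos_of_nonneg (by linarith) hcpos.le
    linarith
  exact hmain.trans hgval
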